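/- If c = f(A,D) is a semistandard symplectic column for sp(2n) with double dble(c) having left/right columns with entries (a_i) in A, (b_i) in B, (c_i) in C, (d_i) in D, and if s ≤ #A and α is an integer with b_s ≤ α < a_{s+1} (or only b_s ≤ α when s = #A), then the truncated column with A^{≤α} = A∩[1,α] and D^{≤α} = D∩[1,α] is a semistandard symplectic column for sp(2α), and its double equals the pair (A^{≤α}∪B^{≤α}, C^{≤α}∪D^{≤α}), i.e. B^{≤α} and C^{≤α} are obtained from A^{≤α}, D^{≤α} by the doubling construction inside [1,α]. -/

import Mathlib

/-- The increasing enumeration of a finite set of integers. -/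
def fsort (X : Finset ℤ) : List ℤ := X.sort (· ≤ ·)

/-- The `m`-th smallest element of `X` (0-based; junk value `0` out of range). -/
def nthF (X : Finset ℤ) (m : ℕ) : ℤ := (fsort X).getD m 0

/-- `J` dominates `I` elementwise: `#J = #I` and `i_m < j_m` for all `m`. -/
def Dominates (I J : Finset ℤ) : Prop :=
  J.card = I.card ∧ ∀ m, m < I.card → nthF I m < nthF J m

/-- Lexicographic comparison of finite sets of integers via their increasing enumerations. -/
def lexLE (X Y : Finset ℤ) : Prop := X = Y ∨ List.Lex (· < ·) (fsort X) (fsort Y)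

/-- `A, D` describe a semistandard symplectic column for `sp(2n)`. -/
def ColSS (n : ℕ) (A D : Finset ℤ) : Prop :=
  A ⊆ Finset.Icc 1 (n : ℤ) ∧ D ⊆ Finset.Icc 1 (n : ℤ) ∧ A.card + D.card ≤ n ∧
    ∃ J ⊆ Finset.Icc 1 (n : ℤ) \ (A ∪ D), Dominates (A ∩ D) J

/-- `(B, C)` is the double of the column `(A, D)`: `B = (A\I) ∪ J`, `C = (D\I) ∪ J` where
`I = A ∩ D` and `J` is the lexicographically smallest subset of the complement of `A ∪ D`
in `{1,…,n}` dominating `I` elementwise. -/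
def IsDouble (n : ℕ) (A D B C : Finset ℤ) : Prop :=
  ∃ J, J ⊆ Finset.Icc 1 (n : ℤ) \ (A ∪ D) ∧ Dominates (A ∩ D) J ∧
    (∀ J', J' ⊆ Finset.Icc 1 (n : ℤ) \ (A ∪ D) → Dominates (A ∩ D) J' → lexLE J J') ∧
    B = (A \ (A ∩ D)) ∪ J ∧ C = (D \ (A ∩ D)) ∪ J

namespace ColSplit

lemma fsort_sorted_lt (X : Finset ℤ) : (fsort X).Pairwise (· < ·) := (Finset.sortedLT_sort X).pairwise
lemma mem_fsort {X : Finset ℤ} {a : ℤ} : a ∈ fsort X ↔ a ∈ X := Finset.mem_sort _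
lemma length_fsort (X : Finset ℤ) : (fsort X).length = X.card := Finset.length_sort _

lemma fsort_eq {X : Finset ℤ} {l : List ℤ} (hs : l.Pairwise (· < ·))
    (hm : ∀ x, x ∈ l ↔ x ∈ X) : fsort X = l := by
  have : Std.Antisymm (α := ℤ) (· < ·) := ⟨fun a b h h' => absurd h' (lt_asymm h)⟩
  refine List.Perm.eq_of_pairwise' (fsort_sorted_lt X) hs ?_
  exact (List.perm_ext_iff_of_nodup (Finset.sort_nodup _ _) hs.nodup).2
    (fun a => mem_fsort.trans (hm a).symm)

lemma nthF_eq {X : Finset ℤ} {m : ℕ} (h : m < X.card) :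
    nthF X m = (fsort X)[m]'(by rwa [length_fsort]) := by
  unfold nthF; exact List.getD_eq_getElem _ _ _

lemma nthF_mem {X : Finset ℤ} {m : ℕ} (h : m < X.card) : nthF X m ∈ X := by
  rw [nthF_eq h, ← mem_fsort]; exact List.getElem_mem _

lemma nthF_strictMono {X : Finset ℤ} {m₁ m₂ : ℕ} (h : m₁ < m₂) (h2 : m₂ < X.card) :
    nthF X m₁ < nthF X m₂ := by
  rw [nthF_eq (h.trans h2), nthF_eq h2]
  exact List.pairwise_iff_getElem.mp (fsort_sorted_lt X) _ _ _ _ h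

lemma nthF_mono {X : Finset ℤ} {m₁ m₂ : ℕ} (h : m₁ ≤ m₂) (h2 : m₂ < X.card) :
    nthF X m₁ ≤ nthF X m₂ := by
  rcases h.lt_or_eq with h | h
  · exact (nthF_strictMono h h2).le
  · rw [h]

lemma mem_iff_nthF {X : Finset ℤ} {x : ℤ} : x ∈ X ↔ ∃ m < X.card, nthF X m = x := by
  constructor
  · intro hx
    rw [← mem_fsort] at hx
    obtain ⟨m, hm, he⟩ := List.getElem_of_mem hx
    exact ⟨m, by rwa [length_fsort] at hm, by rw [nthF_eq (by rwa [length_fsort] at hm)]; exact he⟩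
  · rintro ⟨m, hm, rfl⟩; exact nthF_mem hm

end ColSplit

namespace ColSplit

def cnt (X : Finset ℤ) (α : ℤ) : ℕ := (X.filter (· ≤ α)).card

lemma cnt_le_card {X : Finset ℤ} {α : ℤ} : cnt X α ≤ X.card := Finset.card_filter_le _ _

lemma fsort_filter (X : Finset ℤ) (α : ℤ) :
    fsort (X.filter (· ≤ α)) = (fsort X).filter (fun x => x ≤ α) := by
  apply fsort_eq
  · exact (fsort_sorted_lt X).filter _
  · intro x; simp [List.mem_filter, mem_fsort, Finset.mem_filter]

lemma sorted_filter_le_prefix (l : List ℤ) (hl : l.Pairwise (· ≤ ·)) (α : ℤ) :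
    l.filter (fun x => x ≤ α) <+: l := by
  induction l with
  | nil => simp
  | cons a l ih =>
    rcases List.pairwise_cons.mp hl with ⟨ha, hl'⟩
    by_cases h : a ≤ α
    · rw [List.filter_cons_of_pos (by simpa using h)]
      obtain ⟨t, ht⟩ := ih hl'
      exact ⟨t, by rw [List.cons_append, ht]⟩
    · rw [List.filter_cons_of_neg (by simpa using h)]
      have : l.filter (fun x => x ≤ α) = [] := by
        rw [List.filter_eq_nil_iff]
        intro x hx
        simp only [decide_eq_true_eq]
        intro hxa
        exact h ((ha x hx).trans hxa)
      rw [this]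
      exact ⟨a :: l, rfl⟩

lemma fsort_filter_prefix (X : Finset ℤ) (α : ℤ) :
    fsort (X.filter (· ≤ α)) <+: fsort X := by
  rw [fsort_filter]
  exact sorted_filter_le_prefix _ (Finset.pairwise_sort _ _) _

lemma nthF_filter {X : Finset ℤ} {α : ℤ} {m : ℕ} (hm : m < cnt X α) :
    nthF (X.filter (· ≤ α)) m = nthF X m := by
  obtain ⟨t, ht⟩ := fsort_filter_prefix X α
  unfold nthF
  rw [← ht, List.getD_append]
  rw [length_fsort]
  exact hm

lemma lt_cnt_iff {X : Finset ℤ} {α : ℤ} {m : ℕ} (hm : m < X.card) :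
    m < cnt X α ↔ nthF X m ≤ α := by
  constructor
  · intro h
    have h1 := nthF_filter (X := X) (α := α) h
    have h2 := nthF_mem (X := X.filter (· ≤ α)) h
    rw [h1] at h2
    exact (Finset.mem_filter.mp h2).2
  · intro h
    by_contra hc
    push_neg at hc
    set c := cnt X α with hcdef
    have hcX : c < X.card := lt_of_le_of_lt hc hm
    have key : α < nthF X c := by
      by_contra hk
      push_neg at hk
      -- l[c] ∈ filter list = take c l
      have hpre := fsort_filter_prefix X α
      have htake : fsort (X.filter (· ≤ α)) = (fsort X).take c := by
        rw [List.prefix_iff_eq_take.mp hpre, length_fsort]; rfl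
      have hmemf : nthF X c ∈ X.filter (· ≤ α) :=
        Finset.mem_filter.mpr ⟨nthF_mem hcX, hk⟩
      rw [← mem_fsort, htake] at hmemf
      obtain ⟨m', hm', he⟩ := List.getElem_of_mem hmemf
      have hm'c : m' < c := by
        have := hm'; rw [List.length_take] at this
        omega
      have : (fsort X).take c = (fsort X).take c := rfl
      rw [List.getElem_take] at he
      have hlt : nthF X m' < nthF X c := nthF_strictMono hm'c hcX
      rw [nthF_eq (lt_trans hm'c hcX)] at hlt
      rw [he] at hlt
      exact lt_irrefl _ hlt
    have := nthF_mono hc hm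
    linarith

end ColSplit

namespace ColSplit

lemma cnt_union {X Y : Finset ℤ} (h : Disjoint X Y) (α : ℤ) :
    cnt (X ∪ Y) α = cnt X α + cnt Y α := by
  unfold cnt
  rw [Finset.filter_union]
  exact Finset.card_union_of_disjoint (Finset.disjoint_filter_filter h)

/-- If `J` dominates `I` then for every bound `α`, `J` has at most as many
elements `≤ α` as `I`. -/
lemma cnt_le_of_dominates {I J : Finset ℤ} (h : Dominates I J) (α : ℤ) :
    cnt J α ≤ cnt I α := by
  set r := cnt J α with hr
  rcases Nat.eq_zero_or_pos r with h0 | h0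
  · omega
  have hrJ : r ≤ J.card := cnt_le_card
  have hrI : r ≤ I.card := h.1 ▸ hrJ
  have h1 : nthF J (r - 1) ≤ α := (lt_cnt_iff (by omega)).mp (by omega)
  have h2 : nthF I (r - 1) < nthF J (r - 1) := h.2 _ (by omega)
  have : r - 1 < cnt I α := (lt_cnt_iff (X := I) (by omega)).mpr (by linarith)
  omega

end ColSplit

namespace ColSplit

lemma disjoint_sdiff_right' {A I J : Finset ℤ} (hdisj : Disjoint J A) :
    Disjoint (A \ I) J :=
  Finset.disjoint_of_subset_left (Finset.sdiff_subset) hdisj.symm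

lemma card_double {A I J : Finset ℤ} (hIA : I ⊆ A) (hd : Dominates I J)
    (hdisj : Disjoint J A) : ((A \ I) ∪ J).card = A.card := by
  rw [Finset.card_union_of_disjoint (disjoint_sdiff_right' hdisj), Finset.card_sdiff_of_subset hIA]
  have h1 := Finset.card_le_card hIA
  have h2 := hd.1
  omega

lemma cnt_sdiff_add {A I : Finset ℤ} (hIA : I ⊆ A) (α : ℤ) :
    cnt (A \ I) α + cnt I α = cnt A α := by
  conv_rhs => rw [← Finset.sdiff_union_of_subset hIA]
  rw [cnt_union Finset.sdiff_disjoint]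

lemma cnt_double_le {A I J : Finset ℤ} (hIA : I ⊆ A) (hd : Dominates I J)
    (hdisj : Disjoint J A) (α : ℤ) : cnt ((A \ I) ∪ J) α ≤ cnt A α := by
  rw [cnt_union (disjoint_sdiff_right' hdisj), ← cnt_sdiff_add hIA α]
  exact Nat.add_le_add_left (cnt_le_of_dominates hd α) _

lemma nthF_le_double {A I J : Finset ℤ} (hIA : I ⊆ A) (hd : Dominates I J)
    (hdisj : Disjoint J A) {m : ℕ} (hm : m < A.card) :
    nthF A m ≤ nthF ((A \ I) ∪ J) m := by
  set B := (A \ I) ∪ J with hB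
  by_contra hc
  push_neg at hc
  have hmB : m < B.card := by rw [hB, card_double hIA hd hdisj]; exact hm
  have h1 : m < cnt B (nthF B m) := (lt_cnt_iff hmB).mpr le_rfl
  have h2 : m < cnt A (nthF B m) := lt_of_lt_of_le h1 (cnt_double_le hIA hd hdisj _)
  have := (lt_cnt_iff hm).mp h2
  linarith

lemma fsort_inj {X Y : Finset ℤ} (h : fsort X = fsort Y) : X = Y := by
  ext x
  rw [← mem_fsort, h, mem_fsort]

lemma lex_of_first_diff (k : ℕ) : ∀ (l1 l2 : List ℤ), k < l1.length → k < l2.length →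
    (∀ m, m < k → l1.getD m 0 = l2.getD m 0) → l1.getD k 0 < l2.getD k 0 →
    List.Lex (· < ·) l1 l2 := by
  induction k with
  | zero =>
    intro l1 l2 h1 h2 _ hlt
    rcases l1 with _ | ⟨a, t1⟩
    · simp at h1
    rcases l2 with _ | ⟨b, t2⟩
    · simp at h2
    simp only [List.getD_cons_zero] at hlt
    exact List.Lex.rel hlt
  | succ k ih =>
    intro l1 l2 h1 h2 heq hlt
    rcases l1 with _ | ⟨a, t1⟩
    · simp at h1
    rcases l2 with _ | ⟨b, t2⟩
    · simp at h2
    have h0 : a = b := by simpa using heq 0 (Nat.succ_pos k)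
    subst h0
    exact List.Lex.cons (ih t1 t2 (by simpa using h1) (by simpa using h2)
      (fun m hm => by simpa using heq (m + 1) (by omega)) (by simpa using hlt))

lemma first_diff_of_lex : ∀ {l1 l2 : List ℤ}, List.Lex (· < ·) l1 l2 → l1.length = l2.length →
    ∃ k, k < l1.length ∧ (∀ m, m < k → l1.getD m 0 = l2.getD m 0) ∧
      l1.getD k 0 < l2.getD k 0 := by
  intro l1 l2 h
  induction h with
  | nil => intro hlen; simp at hlen
  | @rel a l1 b l2 hab => intro _; exact ⟨0, by simp, by simp, by simpa using hab⟩
  | @cons a l1 l2 h ih =>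
    intro hlen
    obtain ⟨k, hk, heq, hlt⟩ := ih (by simpa using hlen)
    refine ⟨k + 1, by simpa using Nat.succ_lt_succ hk, ?_, by simpa using hlt⟩
    intro m hm
    rcases m with _ | m
    · simp
    · simpa using heq m (by omega)

end ColSplit

namespace ColSplit

lemma swap_lemma {J : Finset ℤ} {k : ℕ} {x : ℤ} (hk : k < J.card)
    (hlt : ∀ m, m < k → nthF J m < x) (hx : x < nthF J k) :
    (insert x (J.erase (nthF J k))).card = J.card ∧
    (∀ m, m < J.card → m ≠ k → nthF (insert x (J.erase (nthF J k))) m = nthF J m) ∧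
    nthF (insert x (J.erase (nthF J k))) k = x ∧
    List.Lex (· < ·) (fsort (insert x (J.erase (nthF J k)))) (fsort J) := by
  set l := fsort J with hl
  have hlen : l.length = J.card := length_fsort J
  have hkl : k < l.length := by omega
  have hsl : l.Pairwise (· < ·) := by rw [hl]; exact fsort_sorted_lt J
  have hpg : ∀ (i j : ℕ) (h₁ : i < l.length) (h₂ : j < l.length), i < j → l[i] < l[j] :=
    fun i j h₁ h₂ h => List.pairwise_iff_getElem.mp hsl i j h₁ h₂ h
  have hnth : ∀ (m : ℕ) (hm : m < J.card), nthF J m = l[m]'(by omega) := by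
    intro m hm; rw [nthF_eq hm]
  have hxJ : x ∉ J := by
    intro hmem
    obtain ⟨m, hm, he⟩ := mem_iff_nthF.mp hmem
    rcases lt_trichotomy m k with h | h | h
    · have := hlt m h; omega
    · subst h; omega
    · have := nthF_strictMono h hm; omega
  set J2 := insert x (J.erase (nthF J k)) with hJ2
  have hcard : J2.card = J.card := by
    rw [hJ2, Finset.card_insert_of_notMem (fun h => hxJ (Finset.mem_of_mem_erase h)),
      Finset.card_erase_of_mem (nthF_mem hk)]
    omega
  set R := l.take k ++ x :: l.drop (k + 1) with hR
  have hlentake : (l.take k).length = k := by rw [List.length_take]; omega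
  have hlendrop : (l.drop (k + 1)).length = l.length - (k + 1) := List.length_drop
  have hsort : fsort J2 = R := by
    apply fsort_eq
    · rw [hR]
      refine List.pairwise_append.mpr ⟨hsl.sublist (List.take_sublist _ _), ?_, ?_⟩
      · refine List.pairwise_cons.mpr ⟨?_, hsl.sublist (List.drop_sublist _ _)⟩
        intro y hy
        obtain ⟨i, hi, he⟩ := List.getElem_of_mem hy
        rw [List.getElem_drop] at he
        have h1 : l[k] < l[k + 1 + i]'(by omega) := hpg _ _ hkl (by omega) (by omega)
        have h2 : nthF J k = l[k] := hnth k hk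
        rw [← he]; omega
      · intro a ha b hb
        obtain ⟨i, hi, hea⟩ := List.getElem_of_mem ha
        rw [List.getElem_take] at hea
        have hik : i < k := hlentake ▸ hi
        have hax : a < x := by
          have := hlt i (by omega)
          rw [hnth i (by omega)] at this
          rw [← hea]; exact this
        rcases List.mem_cons.mp hb with rfl | hb
        · exact hax
        · obtain ⟨j, hj, heb⟩ := List.getElem_of_mem hb
          rw [List.getElem_drop] at heb
          have : l[i]'(by omega) < l[k + 1 + j]'(by omega) :=
            hpg _ _ (by omega) (by omega) (by omega)
          rw [← hea, ← heb]; exact this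
    · intro y
      rw [hR]
      simp only [List.mem_append, List.mem_cons]
      constructor
      · rintro (hy | rfl | hy)
        · obtain ⟨i, hi, he⟩ := List.getElem_of_mem hy
          rw [List.getElem_take] at he
          have hik : i < k := hlentake ▸ hi
          have hyJ : y ∈ J := by
            rw [← he, ← hnth i (by omega)]; exact nthF_mem (by omega)
          have hyne : y ≠ nthF J k := by
            rw [← he, ← hnth i (by omega)]
            exact ne_of_lt (nthF_strictMono hik hk)
          exact Finset.mem_insert.mpr (Or.inr (Finset.mem_erase.mpr ⟨hyne, hyJ⟩))
        · exact Finset.mem_insert_self _ _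
        · obtain ⟨i, hi, he⟩ := List.getElem_of_mem hy
          rw [List.getElem_drop] at he
          have hyJ : y ∈ J := by
            rw [← he, ← hnth (k + 1 + i) (by omega)]; exact nthF_mem (by omega)
          have hyne : y ≠ nthF J k := by
            rw [← he, ← hnth (k + 1 + i) (by omega)]
            exact (ne_of_lt (nthF_strictMono (by omega) (by omega))).symm
          exact Finset.mem_insert.mpr (Or.inr (Finset.mem_erase.mpr ⟨hyne, hyJ⟩))
      · intro hy
        rcases Finset.mem_insert.mp hy with rfl | hy
        · exact Or.inr (Or.inl rfl)
        · rcases Finset.mem_erase.mp hy with ⟨hyne, hyJ⟩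
          obtain ⟨m, hm, he⟩ := mem_iff_nthF.mp hyJ
          rcases lt_trichotomy m k with h | h | h
          · left
            have h2 : (l.take k)[m]'(by omega) = l[m]'(by omega) := List.getElem_take
            rw [← he, hnth m hm, ← h2]
            exact List.getElem_mem _
          · subst h; exact absurd he.symm hyne
          · right; right
            obtain ⟨m', rfl⟩ : ∃ m', m = k + 1 + m' := ⟨m - (k + 1), by omega⟩
            have h3 : (l.drop (k + 1))[m']'(by omega) = l[k + 1 + m']'(by omega) :=
              List.getElem_drop
            rw [← he, hnth _ hm, ← h3]
            exact List.getElem_mem _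
  have hgd : ∀ m, m < J.card → m ≠ k → nthF J2 m = nthF J m := by
    intro m hm hne
    show (fsort J2).getD m 0 = (fsort J).getD m 0
    rw [hsort, hR, ← hl]
    rcases lt_or_gt_of_ne hne with h | h
    · rw [List.getD_append _ _ _ _ (by omega),
        List.getD_eq_getElem _ _ (by omega), List.getElem_take,
        ← List.getD_eq_getElem _ _ (by omega)]
    · obtain ⟨m', rfl⟩ : ∃ m', m = k + 1 + m' := ⟨m - (k + 1), by omega⟩
      rw [List.getD_append_right _ _ _ _ (by omega), hlentake]
      have h4 : k + 1 + m' - k = m' + 1 := by omega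
      rw [h4, List.getD_cons_succ,
        List.getD_eq_getElem _ _ (by omega), List.getElem_drop,
        ← List.getD_eq_getElem _ _ (by omega)]
  have hgk : nthF J2 k = x := by
    show (fsort J2).getD k 0 = x
    rw [hsort, hR, List.getD_append_right _ _ _ _ (by omega), hlentake]
    simp
  refine ⟨hcard, hgd, hgk, ?_⟩
  refine lex_of_first_diff k _ _ ?_ ?_ ?_ ?_
  · rw [length_fsort, hcard]; omega
  · rw [length_fsort]; omega
  · intro m hm
    exact hgd m (by omega) (by omega)
  · show nthF J2 k < nthF J k
    rw [hgk]; exact hx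

end ColSplit

open ColSplit

/-- **column splitting.** Let `c = f(A,D)` be a semistandard symplectic column
for `sp(2n)` with double `(A,B,C,D)`, let `1 ≤ s ≤ #A` and let `α` be an integer with
`b_s ≤ α`, and `α < a_{s+1}` whenever `s < #A`.  Then the truncated column
`(A^{≤α}, D^{≤α})` is a semistandard symplectic column for `sp(2α)` and its double is
`(B^{≤α}, C^{≤α})`: the doubling construction commutes with truncation at `α`. -/
theorem column_splitting (n : ℕ) (A D B C : Finset ℤ)
    (h1 : ColSS n A D) (h2 : IsDouble n A D B C)
    (s : ℕ) (hs1 : 1 ≤ s) (hs2 : s ≤ A.card) (α : ℤ)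
    (hα1 : nthF B (s - 1) ≤ α) (hα2 : s < A.card → α < nthF A s) :
    ColSS α.toNat (A.filter (· ≤ α)) (D.filter (· ≤ α)) ∧
    IsDouble α.toNat (A.filter (· ≤ α)) (D.filter (· ≤ α))
      (B.filter (· ≤ α)) (C.filter (· ≤ α)) := by
  classical
  obtain ⟨hA, hD, hcard_n, -⟩ := h1
  obtain ⟨J, hJsub, hJdom, hJmin, hBdef, hCdef⟩ := h2
  have hIA : A ∩ D ⊆ A := Finset.inter_subset_left
  have hID : A ∩ D ⊆ D := Finset.inter_subset_right
  have hJA : Disjoint J A := Finset.disjoint_left.mpr fun x hxJ hxA =>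
    (Finset.mem_sdiff.mp (hJsub hxJ)).2 (Finset.mem_union_left _ hxA)
  have hJD : Disjoint J D := Finset.disjoint_left.mpr fun x hxJ hxD =>
    (Finset.mem_sdiff.mp (hJsub hxJ)).2 (Finset.mem_union_right _ hxD)
  have hJn : ∀ x ∈ J, 1 ≤ x ∧ x ≤ (n : ℤ) := fun x hx =>
    Finset.mem_Icc.mp (Finset.mem_sdiff.mp (hJsub hx)).1
  have hBcard : B.card = A.card := by rw [hBdef]; exact card_double hIA hJdom hJA
  have hJdomD : Dominates (A ∩ D) J := hJdom
  have hJcard : J.card = (A ∩ D).card := hJdom.1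
  have hab : ∀ m, m < A.card → nthF A m ≤ nthF B m := by
    intro m hm; rw [hBdef]; exact nthF_le_double hIA hJdom hJA hm
  have hsB : s - 1 < B.card := by omega
  have hBsub : B ⊆ Finset.Icc 1 (n : ℤ) := by
    rw [hBdef]
    intro x hx
    rcases Finset.mem_union.mp hx with hx | hx
    · exact hA (Finset.sdiff_subset hx)
    · exact Finset.mem_Icc.mpr (hJn x hx)
  have hα1' : (1 : ℤ) ≤ α :=
    le_trans (Finset.mem_Icc.mp (hBsub (nthF_mem hsB))).1 hα1
  have hαt : ((α.toNat : ℕ) : ℤ) = α := Int.toNat_of_nonneg (by linarith)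
  -- counts
  have hcAge : s - 1 < cnt A α :=
    (lt_cnt_iff (by omega)).mpr (le_trans (hab (s - 1) (by omega)) hα1)
  have hcAle : cnt A α ≤ s := by
    by_contra hcc
    push_neg at hcc
    have hsA : s < A.card := lt_of_lt_of_le hcc cnt_le_card
    have h3 := (lt_cnt_iff hsA).mp hcc
    have h4 := hα2 hsA
    linarith
  have hcntA : cnt A α = s := by omega
  have hcntB : cnt B α = s := by
    have hge : s - 1 < cnt B α := (lt_cnt_iff (by omega)).mpr hα1
    have hle : cnt B α ≤ cnt A α := by rw [hBdef]; exact cnt_double_le hIA hJdom hJA α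
    omega
  obtain ⟨t, ht⟩ : ∃ t', cnt (A ∩ D) α = t' := ⟨_, rfl⟩
  have htI : t ≤ (A ∩ D).card := ht ▸ cnt_le_card
  have htJ : t ≤ J.card := by rw [hJdom.1]; exact htI
  have hcntJ : cnt J α = t := by
    have hu1 : cnt B α = cnt (A \ (A ∩ D)) α + cnt J α := by
      rw [hBdef]; exact cnt_union (disjoint_sdiff_right' hJA) α
    have hu2 : cnt (A \ (A ∩ D)) α + cnt (A ∩ D) α = cnt A α := cnt_sdiff_add hIA α
    omega
  have hJ0card : (J.filter (· ≤ α)).card = t := by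
    have := hcntJ; exact this
  have hIfilter : (A.filter (· ≤ α)) ∩ (D.filter (· ≤ α)) = (A ∩ D).filter (· ≤ α) := by
    ext x
    simp only [Finset.mem_filter, Finset.mem_inter]
    tauto
  have hI0card : ((A ∩ D).filter (· ≤ α)).card = t := ht
  have hJ0sub : (J.filter (· ≤ α)) ⊆ Finset.Icc 1 ((α.toNat : ℕ) : ℤ) \
      (A.filter (· ≤ α) ∪ D.filter (· ≤ α)) := by
    intro x hx
    obtain ⟨hxJ, hxα⟩ := Finset.mem_filter.mp hx
    refine Finset.mem_sdiff.mpr ⟨Finset.mem_Icc.mpr ⟨(hJn x hxJ).1, by rw [hαt]; exact hxα⟩, ?_⟩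
    intro hmem
    rcases Finset.mem_union.mp hmem with hm | hm
    · exact Finset.disjoint_left.mp hJA hxJ (Finset.mem_filter.mp hm).1
    · exact Finset.disjoint_left.mp hJD hxJ (Finset.mem_filter.mp hm).1
  have hdom0 : Dominates (A.filter (· ≤ α) ∩ D.filter (· ≤ α)) (J.filter (· ≤ α)) := by
    rw [hIfilter]
    refine ⟨by rw [hJ0card, hI0card], ?_⟩
    intro m hm
    have hmt : m < t := by rw [hI0card] at hm; exact hm
    rw [nthF_filter (show m < cnt (A ∩ D) α from by omega),
      nthF_filter (show m < cnt J α from by omega)]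
    exact hJdom.2 m (by omega)
  -- the card bound
  have hIccCard : (Finset.Icc (1 : ℤ) α).card = α.toNat := by
    rw [Int.card_Icc]
    congr 1
    ring
  have hcard_bound : (A.filter (· ≤ α)).card + (D.filter (· ≤ α)).card ≤ α.toNat := by
    have hsubU : (A.filter (· ≤ α) ∪ D.filter (· ≤ α)) ∪ (J.filter (· ≤ α)) ⊆ Finset.Icc (1 : ℤ) α := by
      intro x hx
      rcases Finset.mem_union.mp hx with hx | hx
      · rcases Finset.mem_union.mp hx with hx | hx
        · obtain ⟨h5, h6⟩ := Finset.mem_filter.mp hx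
          exact Finset.mem_Icc.mpr ⟨(Finset.mem_Icc.mp (hA h5)).1, h6⟩
        · obtain ⟨h5, h6⟩ := Finset.mem_filter.mp hx
          exact Finset.mem_Icc.mpr ⟨(Finset.mem_Icc.mp (hD h5)).1, h6⟩
      · obtain ⟨h5, h6⟩ := Finset.mem_filter.mp hx
        exact Finset.mem_Icc.mpr ⟨(hJn x h5).1, h6⟩
    have hdisjU : Disjoint (A.filter (· ≤ α) ∪ D.filter (· ≤ α)) (J.filter (· ≤ α)) := by
      refine Finset.disjoint_left.mpr fun x hx hxJ => ?_
      have hxJ' := (Finset.mem_filter.mp hxJ).1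
      rcases Finset.mem_union.mp hx with hx | hx
      · exact Finset.disjoint_left.mp hJA hxJ' (Finset.mem_filter.mp hx).1
      · exact Finset.disjoint_left.mp hJD hxJ' (Finset.mem_filter.mp hx).1
    have h7 := Finset.card_le_card hsubU
    rw [Finset.card_union_of_disjoint hdisjU, hIccCard] at h7
    have h8 := Finset.card_union_add_card_inter (A.filter (· ≤ α)) (D.filter (· ≤ α))
    rw [hIfilter] at h8
    have h9 : ((A ∩ D).filter (· ≤ α)).card = t := hI0card
    omega
  constructor
  · refine ⟨?_, ?_, hcard_bound, ⟨(J.filter (· ≤ α)), hJ0sub, hdom0⟩⟩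
    · intro x hx
      obtain ⟨h5, h6⟩ := Finset.mem_filter.mp hx
      exact Finset.mem_Icc.mpr ⟨(Finset.mem_Icc.mp (hA h5)).1, by rw [hαt]; exact h6⟩
    · intro x hx
      obtain ⟨h5, h6⟩ := Finset.mem_filter.mp hx
      exact Finset.mem_Icc.mpr ⟨(Finset.mem_Icc.mp (hD h5)).1, by rw [hαt]; exact h6⟩
  · refine ⟨(J.filter (· ≤ α)), hJ0sub, hdom0, ?_, ?_, ?_⟩
    · -- minimality
      intro J' hsub' hdom'
      rw [hIfilter] at hdom'
      have hJ'card : J'.card = t := by rw [hdom'.1, hI0card]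
      by_contra hcon
      have hne : (J.filter (· ≤ α)) ≠ J' := fun h => hcon (Or.inl h)
      have hnlex : ¬ List.Lex (· < ·) (fsort (J.filter (· ≤ α))) (fsort J') := fun h => hcon (Or.inr h)
      have hlex : List.Lex (· < ·) (fsort J') (fsort (J.filter (· ≤ α))) := by
        have htri := @trichotomous (List ℤ) (List.Lex (· < ·)) (List.Lex.trichotomous _)
          (fsort (J.filter (· ≤ α))) (fsort J')
        rcases htri with h | h | h
        · exact absurd h hnlex
        · exact absurd (fsort_inj h) hne
        · exact h
      obtain ⟨k, hk, heq, hklt⟩ := first_diff_of_lex hlex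
        (by rw [length_fsort, length_fsort, hJ'card, hJ0card])
      rw [length_fsort, hJ'card] at hk
      -- translate getD facts to nthF facts
      have hklt' : nthF J' k < nthF (J.filter (· ≤ α)) k := hklt
      have heq' : ∀ m, m < k → nthF J' m = nthF J m := by
        intro m hm
        have h5 : nthF J' m = nthF (J.filter (· ≤ α)) m := heq m hm
        rwa [nthF_filter (show m < cnt J α from by omega)] at h5
      have hkJ : k < J.card := by omega
      have hkJ' : k < J'.card := by omega
      set x := nthF J' k with hxdef
      have hx : x < nthF J k := by
        rwa [nthF_filter (show k < cnt J α from by omega)] at hklt'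
      have hlt : ∀ m, m < k → nthF J m < x := by
        intro m hm
        rw [← heq' m hm]
        exact nthF_strictMono hm hkJ'
      obtain ⟨hc2, hg2, hgk2, hlex2⟩ := swap_lemma hkJ hlt hx
      set J2 := insert x (J.erase (nthF J k)) with hJ2def
      have hxmem : x ∈ J' := nthF_mem hkJ'
      have hxicc := Finset.mem_sdiff.mp (hsub' hxmem)
      have hx1 : (1 : ℤ) ≤ x := (Finset.mem_Icc.mp hxicc.1).1
      have hxα : x ≤ α := by
        have := (Finset.mem_Icc.mp hxicc.1).2
        rwa [hαt] at this
      have hxn : x ≤ (n : ℤ) := le_trans hx.le (hJn _ (nthF_mem hkJ)).2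
      have hxAD : x ∉ A ∪ D := by
        intro hmem
        apply hxicc.2
        rcases Finset.mem_union.mp hmem with hm | hm
        · exact Finset.mem_union_left _ (Finset.mem_filter.mpr ⟨hm, hxα⟩)
        · exact Finset.mem_union_right _ (Finset.mem_filter.mpr ⟨hm, hxα⟩)
      have hJ2sub : J2 ⊆ Finset.Icc 1 (n : ℤ) \ (A ∪ D) := by
        intro y hy
        rcases Finset.mem_insert.mp hy with rfl | hy
        · exact Finset.mem_sdiff.mpr ⟨Finset.mem_Icc.mpr ⟨hx1, hxn⟩, hxAD⟩
        · exact hJsub (Finset.mem_of_mem_erase hy)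
      have hJ2dom : Dominates (A ∩ D) J2 := by
        refine ⟨by rw [hc2, hJdom.1], ?_⟩
        intro m hm
        rcases eq_or_ne m k with rfl | hne2
        · rw [hgk2]
          have h5 : nthF (A ∩ D) m = nthF ((A ∩ D).filter (· ≤ α)) m :=
            (nthF_filter (show m < cnt (A ∩ D) α from by omega)).symm
          rw [h5]
          exact hdom'.2 m (by rw [hI0card]; omega)
        · rw [hg2 m (by omega) hne2]
          exact hJdom.2 m hm
      have hmin := hJmin J2 hJ2sub hJ2dom
      rcases hmin with h | h
      · rw [h] at hlex2
        exact (List.Lex.asymm (r := (· < ·))).asymm _ _ hlex2 hlex2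
      · exact (List.Lex.asymm (r := (· < ·))).asymm _ _ hlex2 h
    · rw [hBdef, hIfilter]
      ext y
      simp only [Finset.mem_filter, Finset.mem_union, Finset.mem_sdiff, Finset.mem_inter]
      tauto
    · rw [hCdef, hIfilter]
      ext y
      simp only [Finset.mem_filter, Finset.mem_union, Finset.mem_sdiff, Finset.mem_inter]
      tauto
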